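/- For finite rooted graphs (Γ₁,o₁) and (Γ₂,o₂) with characteristic polynomials φ, one has Schwenk's formula for the star product: φ_{Γ₁⊛Γ₂}(x) = φ_{Γ₁}(x)·φ_{Γ₂∖o₂}(x) + φ_{Γ₁∖o₁}(x)·φ_{Γ₂}(x) - x·φ_{Γ₁∖o₁}(x)·φ_{Γ₂∖o₂}(x). -/

import Mathlib

open Matrix
open Classical

/-- The adjacency matrix of a finite simple graph, with complex entries. -/
noncomputable def adjMat {V : Type*} [Fintype V] (G : SimpleGraph V) : Matrix V V ℂ :=
  Matrix.of fun i j => if G.Adj i j then 1 else 0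

/-- The adjacency matrix of the graph obtained by deleting the root `o`. -/
noncomputable def adjMatDelete {V : Type*} [Fintype V] (G : SimpleGraph V) (o : V) :
    Matrix {v : V // v ≠ o} {v : V // v ≠ o} ℂ :=
  (adjMat G).submatrix Subtype.val Subtype.val

/-- The star product of two rooted graphs: the two graphs glued at their roots. -/
def starProd {V₁ V₂ : Type*} (G₁ : SimpleGraph V₁) (o₁ : V₁)
    (G₂ : SimpleGraph V₂) (o₂ : V₂) : SimpleGraph (V₁ ⊕ {v : V₂ // v ≠ o₂}) where
  Adj u v :=
    match u, v with
    | Sum.inl a, Sum.inl b => G₁.Adj a b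
    | Sum.inl a, Sum.inr b => a = o₁ ∧ G₂.Adj o₂ b.val
    | Sum.inr a, Sum.inl b => b = o₁ ∧ G₂.Adj o₂ a.val
    | Sum.inr a, Sum.inr b => G₂.Adj a.val b.val
  symm := ⟨by
    rintro (a | a) (b | b) h
    · exact G₁.adj_symm h
    · exact h
    · exact h
    · exact G₂.adj_symm h⟩
  loopless := ⟨by
    rintro (a | a) h
    · exact G₁.irrefl h
    · exact G₂.irrefl h⟩

private lemma aux_corner {α β : Type*} [Fintype α] [Fintype β] [DecidableEq α] [DecidableEq β]
    [Unique α] (T T' : Matrix (α ⊕ β) (α ⊕ β) ℂ) (t : ℂ)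
    (h11 : T (Sum.inl default) (Sum.inl default) = t)
    (h11' : T' (Sum.inl default) (Sum.inl default) = 0)
    (hrow : ∀ j : β, T (Sum.inl default) (Sum.inr j) = T' (Sum.inl default) (Sum.inr j))
    (hrest : ∀ i, i ≠ Sum.inl default → ∀ j, T i j = T' i j) :
    T.det = t * (T.toBlocks₂₂).det + T'.det := by
  classical
  have hsplit : T (Sum.inl default) =
      Pi.single (Sum.inl default) t + (fun j => T' (Sum.inl default) j) := by
    funext j
    rcases j with a | j
    · have ha : a = default := Unique.eq_default a
      subst ha
      simp [Pi.single_apply, h11, h11']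
    · simp [Pi.single_apply, hrow j]
  have h1 : T.det = (T.updateRow (Sum.inl default) (Pi.single (Sum.inl default) t)).det
      + (T.updateRow (Sum.inl default) (fun j => T' (Sum.inl default) j)).det := by
    conv_lhs => rw [← updateRow_eq_self T (Sum.inl default), hsplit, det_updateRow_add]
  have h2 : T.updateRow (Sum.inl default) (fun j => T' (Sum.inl default) j) = T' := by
    ext i j
    by_cases hi : i = Sum.inl default
    · subst hi; simp [updateRow_self]
    · rw [updateRow_ne hi]; exact hrest i hi j
  have h3 : (T.updateRow (Sum.inl default) (Pi.single (Sum.inl default) t)).det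
      = t * (T.toBlocks₂₂).det := by
    set U := T.updateRow (Sum.inl default) (Pi.single (Sum.inl default) t) with hU
    rw [← fromBlocks_toBlocks U]
    have h12 : U.toBlocks₁₂ = 0 := by
      ext a j
      have ha : a = default := Unique.eq_default a
      subst ha
      simp [hU, Matrix.toBlocks₁₂, updateRow_self, Pi.single_apply]
    have h22 : U.toBlocks₂₂ = T.toBlocks₂₂ := by
      ext i j
      simp [hU, Matrix.toBlocks₂₂, updateRow_ne (show (Sum.inr i : α ⊕ β) ≠ Sum.inl default by simp)]
    rw [h12, h22, det_fromBlocks_zero₁₂]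
    congr 1
    rw [det_unique]
    simp [hU, Matrix.toBlocks₁₁, updateRow_self, Pi.single_apply]
  rw [h1, h2, h3]

/-- Schwenk's formula for the characteristic polynomial of a star product:
`φ_{Γ₁⊛Γ₂}(x) = φ_{Γ₁}(x)·φ_{Γ₂∖o₂}(x) + φ_{Γ₁∖o₁}(x)·φ_{Γ₂}(x)
  - x·φ_{Γ₁∖o₁}(x)·φ_{Γ₂∖o₂}(x)`, where `φ(x) = det(xI - A)`. -/
theorem charpoly_starProd {V₁ V₂ : Type*} [Fintype V₁] [Fintype V₂]
    [DecidableEq V₁] [DecidableEq V₂]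
    (G₁ : SimpleGraph V₁) (o₁ : V₁) (G₂ : SimpleGraph V₂) (o₂ : V₂) (x : ℂ) :
    (x • (1 : Matrix (V₁ ⊕ {v : V₂ // v ≠ o₂}) (V₁ ⊕ {v : V₂ // v ≠ o₂}) ℂ)
        - adjMat (starProd G₁ o₁ G₂ o₂)).det
      = (x • (1 : Matrix V₁ V₁ ℂ) - adjMat G₁).det
          * (x • 1 - adjMatDelete G₂ o₂).det
        + (x • 1 - adjMatDelete G₁ o₁).det
          * (x • (1 : Matrix V₂ V₂ ℂ) - adjMat G₂).det
        - x * ((x • 1 - adjMatDelete G₁ o₁).det * (x • 1 - adjMatDelete G₂ o₂).det) := by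
  classical
  set P : Matrix V₁ V₁ ℂ := x • 1 - adjMat G₁ with hP
  set P' : Matrix {v : V₁ // v ≠ o₁} {v : V₁ // v ≠ o₁} ℂ := x • 1 - adjMatDelete G₁ o₁ with hP'
  set Q : Matrix {v : V₂ // v ≠ o₂} {v : V₂ // v ≠ o₂} ℂ := x • 1 - adjMatDelete G₂ o₂ with hQ
  set S : Matrix V₂ V₂ ℂ := x • 1 - adjMat G₂ with hS
  set M : Matrix (V₁ ⊕ {v : V₂ // v ≠ o₂}) (V₁ ⊕ {v : V₂ // v ≠ o₂}) ℂ :=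
    x • 1 - adjMat (starProd G₁ o₁ G₂ o₂) with hM
  set bb : {v : V₂ // v ≠ o₂} → ℂ := fun j => if G₂.Adj o₂ j.val then 1 else 0 with hbb
  -- entries of M
  have hMll : ∀ a c, M (Sum.inl a) (Sum.inl c) = P a c := by
    intro a c
    simp [hM, hP, adjMat, starProd, Matrix.sub_apply, Matrix.smul_apply, Matrix.one_apply,
      Sum.inl.injEq]
    exact if_congr Iff.rfl rfl rfl
  have hMlr : ∀ a (j : {v : V₂ // v ≠ o₂}),
      M (Sum.inl a) (Sum.inr j) = -(if a = o₁ ∧ G₂.Adj o₂ j.val then 1 else 0) := by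
    intro a j
    simp [hM, adjMat, starProd, Matrix.sub_apply, Matrix.smul_apply, Matrix.one_apply]
    congr 1
  have hMrl : ∀ (j : {v : V₂ // v ≠ o₂}) a,
      M (Sum.inr j) (Sum.inl a) = -(if a = o₁ ∧ G₂.Adj o₂ j.val then 1 else 0) := by
    intro j a
    simp [hM, adjMat, starProd, Matrix.sub_apply, Matrix.smul_apply, Matrix.one_apply]
    congr 1
  have hMrr : ∀ j k, M (Sum.inr j) (Sum.inr k) = Q j k := by
    intro j k
    simp [hM, hQ, adjMat, adjMatDelete, starProd, Matrix.sub_apply, Matrix.smul_apply,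
      Matrix.one_apply, Sum.inr.injEq, Subtype.ext_iff]
    exact if_congr Iff.rfl rfl rfl
  have hP'e : ∀ a c, P' a c = P a.val c.val := by
    intro a c
    simp [hP', hP, adjMat, adjMatDelete, Matrix.sub_apply, Matrix.smul_apply,
      Matrix.one_apply, Subtype.ext_iff]
  -- Step A: split row (inl o₁)
  have hrowsplit : M (Sum.inl o₁) =
      Sum.elim (fun c => P o₁ c) (fun _ => (0:ℂ)) + Sum.elim (fun _ : V₁ => (0:ℂ)) (fun j => -(bb j)) := by
    funext j
    rcases j with c | j
    · simp [hMll o₁ c]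
    · simp [hMlr o₁ j, hbb]
  set M₁ := M.updateRow (Sum.inl o₁) (Sum.elim (fun c => P o₁ c) (fun _ => (0:ℂ))) with hM₁
  set N := M.updateRow (Sum.inl o₁) (Sum.elim (fun _ : V₁ => (0:ℂ)) (fun j => -(bb j))) with hN
  have hA : M.det = M₁.det + N.det := by
    conv_lhs => rw [← updateRow_eq_self M (Sum.inl o₁), hrowsplit, det_updateRow_add]
  -- Step B
  have hB : M₁.det = P.det * Q.det := by
    rw [← fromBlocks_toBlocks M₁]
    have h12 : M₁.toBlocks₁₂ = 0 := by
      ext a j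
      by_cases ha : a = o₁
      · subst ha; simp [Matrix.toBlocks₁₂, hM₁, updateRow_self]
      · simp [Matrix.toBlocks₁₂, hM₁,
          updateRow_ne (show (Sum.inl a : V₁ ⊕ {v : V₂ // v ≠ o₂}) ≠ Sum.inl o₁ by simp [ha]),
          hMlr, ha]
    have h11 : M₁.toBlocks₁₁ = P := by
      ext a c
      by_cases ha : a = o₁
      · subst ha; simp [Matrix.toBlocks₁₁, hM₁, updateRow_self]
      · simp [Matrix.toBlocks₁₁, hM₁,
          updateRow_ne (show (Sum.inl a : V₁ ⊕ {v : V₂ // v ≠ o₂}) ≠ Sum.inl o₁ by simp [ha]),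
          hMll]
    have h22 : M₁.toBlocks₂₂ = Q := by
      ext j k
      simp [Matrix.toBlocks₂₂, hM₁,
        updateRow_ne (show (Sum.inr j : V₁ ⊕ {v : V₂ // v ≠ o₂}) ≠ Sum.inl o₁ by simp),
        hMrr]
    rw [h12, h11, h22, det_fromBlocks_zero₁₂]
  -- Step C: split column (inl o₁) of N
  have hNro : N (Sum.inl o₁) = Sum.elim (fun _ : V₁ => (0:ℂ)) (fun j => -(bb j)) := by
    simp [hN, updateRow_self]
  have hNother : ∀ i, i ≠ Sum.inl o₁ → N i = M i := by
    intro i hi; simp [hN, updateRow_ne hi]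
  have hcolsplit : (fun i => N i (Sum.inl o₁)) =
      Sum.elim (fun a => if a = o₁ then 0 else P a o₁) (fun _ => (0:ℂ)) + Sum.elim (fun _ : V₁ => (0:ℂ)) (fun j => -(bb j)) := by
    funext i
    rcases i with a | j
    · by_cases ha : a = o₁
      · subst ha; simp [hNro]
      · rw [hNother _ (by simp [ha])]
        simp [hMll, ha]
    · rw [hNother _ (by simp)]
      simp [hMrl, hbb]
  set N₁ := N.updateCol (Sum.inl o₁) (Sum.elim (fun a => if a = o₁ then 0 else P a o₁) (fun _ => (0:ℂ)))
    with hN₁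
  set N₂ := N.updateCol (Sum.inl o₁) (Sum.elim (fun _ : V₁ => (0:ℂ)) (fun j => -(bb j))) with hN₂
  have hC : N.det = N₁.det + N₂.det := by
    conv_lhs => rw [← updateCol_eq_self N (Sum.inl o₁), hcolsplit, det_updateCol_add]
  -- N₁ has determinant 0
  have hCzero : N₁.det = 0 := by
    rw [← fromBlocks_toBlocks N₁]
    have h21 : N₁.toBlocks₂₁ = 0 := by
      ext j a
      by_cases ha : a = o₁
      · subst ha; simp [Matrix.toBlocks₂₁, hN₁, updateCol_self]
      · simp only [Matrix.toBlocks₂₁, Matrix.of_apply, hN₁,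
          updateCol_ne (show (Sum.inl a : V₁ ⊕ {v : V₂ // v ≠ o₂}) ≠ Sum.inl o₁ by simp [ha])]
        rw [hNother _ (by simp)]
        simp [hMrl, ha]
    rw [h21, det_fromBlocks_zero₂₁]
    have hzero : (N₁.toBlocks₁₁).det = 0 := by
      apply det_eq_zero_of_row_eq_zero o₁
      intro c
      by_cases hc : c = o₁
      · subst hc; simp [Matrix.toBlocks₁₁, hN₁, updateCol_self]
      · simp only [Matrix.toBlocks₁₁, Matrix.of_apply, hN₁,
          updateCol_ne (show (Sum.inl c : V₁ ⊕ {v : V₂ // v ≠ o₂}) ≠ Sum.inl o₁ by simp [hc])]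
        rw [hNro]
        simp
    rw [hzero, zero_mul]
  -- unique instances
  haveI u₁ : Unique {v : V₁ // v = o₁} := ⟨⟨⟨o₁, rfl⟩⟩, fun a => Subtype.ext a.2⟩
  haveI u₂ : Unique {v : V₂ // v = o₂} := ⟨⟨⟨o₂, rfl⟩⟩, fun a => Subtype.ext a.2⟩
  -- the reindexing equivalence for N₂
  let e : ({v : V₁ // v ≠ o₁} ⊕ ({v : V₁ // v = o₁} ⊕ {v : V₂ // v ≠ o₂}))
      ≃ (V₁ ⊕ {v : V₂ // v ≠ o₂}) :=
    { toFun := fun i => match i with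
        | Sum.inl a => Sum.inl a.val
        | Sum.inr (Sum.inl u) => Sum.inl u.val
        | Sum.inr (Sum.inr j) => Sum.inr j
      invFun := fun i => match i with
        | Sum.inl a => if h : a = o₁ then Sum.inr (Sum.inl ⟨a, h⟩) else Sum.inl ⟨a, h⟩
        | Sum.inr j => Sum.inr (Sum.inr j)
      left_inv := by
        rintro (a | (u | j))
        · simp [a.2]
        · rcases u with ⟨v, hv⟩; subst hv; simp
        · rfl
      right_inv := by
        rintro (a | j)
        · by_cases h : a = o₁ <;> simp [h]
        · rfl }
  have he1 : ∀ (a : {v : V₁ // v ≠ o₁}), e (Sum.inl a) = Sum.inl a.val := fun _ => rfl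
  have he2 : ∀ (u : {v : V₁ // v = o₁}), e (Sum.inr (Sum.inl u)) = Sum.inl u.val := fun _ => rfl
  have he3 : ∀ (j : {v : V₂ // v ≠ o₂}), e (Sum.inr (Sum.inr j)) = Sum.inr j := fun _ => rfl
  -- entries of N₂
  have hN₂col : ∀ i, N₂ i (Sum.inl o₁) = Sum.elim (fun _ : V₁ => (0:ℂ)) (fun j => -(bb j)) i := by
    intro i; simp [hN₂, updateCol_self]
  have hN₂other : ∀ i j, j ≠ Sum.inl o₁ → N₂ i j = N i j := by
    intro i j hj; simp [hN₂, updateCol_ne hj]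
  set D := ((N₂.submatrix e e).toBlocks₂₂ :
    Matrix ({v : V₁ // v = o₁} ⊕ {v : V₂ // v ≠ o₂})
           ({v : V₁ // v = o₁} ⊕ {v : V₂ // v ≠ o₂}) ℂ) with hD
  -- Step D
  have hDstep : N₂.det = P'.det * D.det := by
    rw [← det_submatrix_equiv_self e N₂, ← fromBlocks_toBlocks (N₂.submatrix e e)]
    have h21 : (N₂.submatrix e e).toBlocks₂₁ = 0 := by
      ext i a
      rcases i with u | j
      · simp only [Matrix.toBlocks₂₁, Matrix.of_apply, Matrix.submatrix_apply, he1, he2]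
        rw [hN₂other _ _ (by simp [a.2]), u.2, hNro]
        simp
      · simp only [Matrix.toBlocks₂₁, Matrix.of_apply, Matrix.submatrix_apply, he1, he3]
        rw [hN₂other _ _ (by simp [a.2]), hNother _ (by simp), hMrl]
        simp [a.2]
    have h11 : (N₂.submatrix e e).toBlocks₁₁ = P' := by
      ext a c
      simp only [Matrix.toBlocks₁₁, Matrix.of_apply, Matrix.submatrix_apply, he1]
      rw [hN₂other _ _ (by simp [c.2]), hNother _ (by simp [a.2]), hMll, hP'e]
    rw [h21, h11, det_fromBlocks_zero₂₁, ← hD]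
  -- Step E : D.det = S.det - x * Q.det
  let e₂ : ({v : V₂ // v = o₂} ⊕ {v : V₂ // v ≠ o₂}) ≃ V₂ :=
    { toFun := fun i => match i with
        | Sum.inl u => u.val
        | Sum.inr j => j.val
      invFun := fun v => if h : v = o₂ then Sum.inl ⟨v, h⟩ else Sum.inr ⟨v, h⟩
      left_inv := by
        rintro (u | j)
        · rcases u with ⟨v, hv⟩; subst hv; simp
        · simp [j.2]
      right_inv := by
        intro v
        by_cases h : v = o₂ <;> simp [h] }
  have he₂1 : ∀ (u : {v : V₂ // v = o₂}), e₂ (Sum.inl u) = u.val := fun _ => rfl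
  have he₂2 : ∀ (j : {v : V₂ // v ≠ o₂}), e₂ (Sum.inr j) = j.val := fun _ => rfl
  let g : ({v : V₂ // v = o₂} ⊕ {v : V₂ // v ≠ o₂})
      ≃ ({v : V₁ // v = o₁} ⊕ {v : V₂ // v ≠ o₂}) :=
    Equiv.sumCongr (Equiv.ofUnique _ _) (Equiv.refl _)
  set T := S.submatrix e₂ e₂ with hT
  set T' := D.submatrix g g with hT'
  have hSe : ∀ v w, S v w = (if v = w then x else 0) - (if G₂.Adj v w then 1 else 0) := by
    intro v w
    simp [hS, adjMat, Matrix.sub_apply, Matrix.smul_apply, Matrix.one_apply]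
  have hQe : ∀ j k, Q j k = (if j = k then x else 0) - (if G₂.Adj j.val k.val then 1 else 0) := by
    intro j k
    simp [hQ, adjMat, adjMatDelete, Matrix.sub_apply, Matrix.smul_apply, Matrix.one_apply]
  have hDval : ∀ i j, D i j = N₂ (e (Sum.inr i)) (e (Sum.inr j)) := by
    intro i j; simp [hD, Matrix.toBlocks₂₂]
  have hgl : g (Sum.inl default) = Sum.inl default := rfl
  have hgr : ∀ (j : {v : V₂ // v ≠ o₂}), g (Sum.inr j) = Sum.inr j := fun _ => rfl
  have hdef₂ : (default : {v : V₂ // v = o₂}).val = o₂ := (default : {v : V₂ // v = o₂}).2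
  have hdef₁ : (default : {v : V₁ // v = o₁}).val = o₁ := (default : {v : V₁ // v = o₁}).2
  have haux : T.det = x * (T.toBlocks₂₂).det + T'.det := by
    apply aux_corner
    · rw [hT, Matrix.submatrix_apply, he₂1, hdef₂, hSe]
      simp
    · rw [hT', Matrix.submatrix_apply, hgl, hDval, he2, hdef₁, hN₂col]
      simp
    · intro j
      rw [hT, Matrix.submatrix_apply, he₂1, he₂2, hdef₂, hSe]
      rw [hT', Matrix.submatrix_apply, hgl, hgr, hDval, he2, he3, hdef₁]
      rw [hN₂other _ _ (by simp), hNro]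
      simp [hbb, j.2, Ne.symm j.2]
    · rintro (u | k) hi j
      · exact absurd (by rw [Unique.eq_default u]) hi
      · rcases j with u | l
        · have hu : u = default := Unique.eq_default u
          subst hu
          rw [hT, Matrix.submatrix_apply, he₂2, he₂1, hdef₂, hSe]
          rw [hT', Matrix.submatrix_apply, hgl, hgr, hDval, he2, he3, hdef₁]
          rw [hN₂col]
          simp [hbb, k.2, G₂.adj_comm]
        · rw [hT, Matrix.submatrix_apply, he₂2, he₂2, hSe]
          rw [hT', Matrix.submatrix_apply, hgr, hgr, hDval, he3, he3]
          rw [hN₂other _ _ (by simp), hNother _ (by simp), hMrr, hQe]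
          simp [Subtype.ext_iff]
  have hT22 : T.toBlocks₂₂ = Q := by
    ext k l
    simp only [Matrix.toBlocks₂₂, Matrix.of_apply, hT, Matrix.submatrix_apply, he₂2]
    rw [hSe, hQe]
    simp [Subtype.ext_iff]
  have hTdet : T.det = S.det := by rw [hT, det_submatrix_equiv_self]
  have hT'det : T'.det = D.det := by rw [hT', det_submatrix_equiv_self]
  have hE : D.det = S.det - x * Q.det := by
    rw [← hT'det, ← hTdet, haux, hT22]; ring
  rw [hA, hB, hC, hCzero, hDstep, hE]
  ring
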